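/- Let R be a semi-graded ring and f : M → N a homogeneous homomorphism of semi-graded left R-modules which is injective. Then f is a kernel of the canonical projection j : N → N/Im(f) in the category of semi-graded modules: j ∘ f = 0, and for every homogeneous morphism g : P → N with j ∘ g = 0 there is a unique homogeneous morphism h : P → M with f ∘ h = g. -/

import Mathlib

open DirectSum

def SGRing (R : Type) [Ring R] (𝒜 : ℤ → AddSubgroup R) : Prop :=
  DirectSum.IsInternal 𝒜 ∧
  (∀ m n : ℤ, ∀ a ∈ 𝒜 m, ∀ b ∈ 𝒜 n, a * b ∈ ⨆ k ≤ m + n, 𝒜 k) ∧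
  (1 : R) ∈ 𝒜 0

def SGModule (R : Type) [Ring R] (𝒜 : ℤ → AddSubgroup R)
    (M : Type) [AddCommGroup M] [Module R M] (ℳ : ℤ → AddSubgroup M) : Prop :=
  DirectSum.IsInternal ℳ ∧
  ∀ m : ℤ, 0 ≤ m → ∀ n : ℤ, ∀ r ∈ 𝒜 m, ∀ x ∈ ℳ n, r • x ∈ ⨆ k ≤ m + n, ℳ k

def IsSGSub {M : Type} [AddCommGroup M] (ℳ : ℤ → AddSubgroup M) (N : AddSubgroup M) : Prop :=
  DirectSum.IsInternal (fun n : ℤ => (N ⊓ ℳ n).addSubgroupOf N)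

set_option synthInstance.maxHeartbeats 1000000
set_option maxHeartbeats 1000000


lemma key_reflect {M N : Type} [AddCommGroup M] [AddCommGroup N]
    (ℳ : ℤ → AddSubgroup M) (𝒩 : ℤ → AddSubgroup N)
    (hMint : DirectSum.IsInternal ℳ) (hNint : DirectSum.IsInternal 𝒩)
    (f : M →+ N) (hf : ∀ n : ℤ, ∀ x ∈ ℳ n, f x ∈ 𝒩 n)
    (hinj : Function.Injective f) (n : ℤ) (m : M) (hm : f m ∈ 𝒩 n) :
    m ∈ ℳ n := by
  obtain ⟨d, hd⟩ := hMint.2 m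
  set fk : ∀ k : ℤ, ℳ k →+ 𝒩 k := fun k =>
    ((f.comp (ℳ k).subtype).codRestrict (𝒩 k) (fun x => hf k x x.2))
  set F : (⨁ k, ℳ k) →+ (⨁ k, 𝒩 k) :=
    DFinsupp.mapRange.addMonoidHom fk
  have hcomm : (DirectSum.coeAddMonoidHom 𝒩).comp F
      = f.comp (DirectSum.coeAddMonoidHom ℳ) := by
    refine DirectSum.addHom_ext fun k x => ?_
    simp only [AddMonoidHom.comp_apply, F, fk]
    erw [DFinsupp.mapRange.addMonoidHom_apply, DFinsupp.mapRange_single]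
    erw [DirectSum.coeAddMonoidHom_of, DirectSum.coeAddMonoidHom_of]
    rfl
  have h1 : DirectSum.coeAddMonoidHom 𝒩 (F d) = f m := by
    have := congrArg (fun φ => φ d) hcomm
    simpa [hd] using this
  have h2 : DirectSum.coeAddMonoidHom 𝒩 (DirectSum.of (fun k => 𝒩 k) n ⟨f m, hm⟩) = f m := by
    simp
  have hFd : F d = DirectSum.of (fun k => 𝒩 k) n ⟨f m, hm⟩ := hNint.1 (h1.trans h2.symm)
  have hdk : ∀ k, k ≠ n → d k = 0 := by
    intro k hk
    have : (F d) k = 0 := by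
      rw [hFd]
      exact DirectSum.of_eq_of_ne _ _ _ hk
    have : fk k (d k) = 0 := by
      simpa [F, DFinsupp.mapRange.addMonoidHom] using this
    have : f (d k) = 0 := congrArg Subtype.val this
    have : f (d k) = f 0 := by simpa using this
    exact Subtype.ext (hinj this)
  have hdof : d = DirectSum.of (fun k => ℳ k) n (d n) := by
    refine DFinsupp.ext fun k => ?_
    by_cases hk : k = n
    · subst hk; simp [DirectSum.of_eq_same]
    · rw [DirectSum.of_eq_of_ne _ _ _ hk, hdk k hk]
  have : m = (d n : M) := by
    rw [← hd, hdof]; simp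
  rw [this]; exact (d n).2

theorem mono_is_kernel_of_projection
    (R : Type) [Ring R] (𝒜 : ℤ → AddSubgroup R) (hR : SGRing R 𝒜)
    (M : Type) [AddCommGroup M] [Module R M] (ℳ : ℤ → AddSubgroup M)
    (hM : SGModule R 𝒜 M ℳ)
    (N : Type) [AddCommGroup N] [Module R N] (𝒩 : ℤ → AddSubgroup N)
    (hN : SGModule R 𝒜 N 𝒩)
    (f : M →ₗ[R] N) (hf : ∀ n : ℤ, ∀ x ∈ ℳ n, f x ∈ 𝒩 n)
    (hinj : Function.Injective f) :
    -- j ∘ f = 0 for j : N → N/Im(f) the canonical projection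
    (LinearMap.range f).mkQ.comp f = 0 ∧
    -- universal property of the kernel
    ∀ (P : Type) [AddCommGroup P] [Module R P], ∀ (Pgrading : ℤ → AddSubgroup P),
      SGModule R 𝒜 P Pgrading →
      ∀ g : P →ₗ[R] N, (∀ n : ℤ, ∀ x ∈ Pgrading n, g x ∈ 𝒩 n) →
      (LinearMap.range f).mkQ.comp g = 0 →
      ∃! h : P →ₗ[R] M, (∀ n : ℤ, ∀ x ∈ Pgrading n, h x ∈ ℳ n) ∧ f.comp h = g := by
  constructor
  · ext x
    simp [Submodule.Quotient.mk_eq_zero]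
  · intro P _ _ Pgrading hP g hg hjg
    have hmem : ∀ x : P, g x ∈ LinearMap.range f := by
      intro x
      have := LinearMap.congr_fun hjg x
      simpa [Submodule.Quotient.mk_eq_zero] using this
    set e : M ≃ₗ[R] LinearMap.range f := LinearEquiv.ofInjective f hinj
    set h : P →ₗ[R] M :=
      e.symm.toLinearMap.comp (g.codRestrict (LinearMap.range f) hmem)
    have hfh : ∀ x : P, f (h x) = g x := by
      intro x
      rw [← LinearEquiv.ofInjective_apply f (h := hinj) (h x)]
      show ((e (e.symm _)) : N) = g x
      rw [e.apply_symm_apply]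
      rfl
    refine ⟨h, ⟨?_, ?_⟩, ?_⟩
    · intro n x hx
      exact key_reflect ℳ 𝒩 hM.1 hN.1 f.toAddMonoidHom hf hinj n (h x)
        (by rw [LinearMap.toAddMonoidHom_coe, hfh]; exact hg n x hx)
    · ext x; exact hfh x
    · rintro h' ⟨-, hfh'⟩
      ext x
      apply hinj
      rw [hfh x]
      exact LinearMap.congr_fun hfh' x
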